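/- arXiv:math/9901135 — 3 statements merged into one kernel-verified Lean document; each statement's English description precedes it below -/
import Mathlib

section
/- The number of left factors of Dyck paths of length k (sequences of k up/down steps with all partial sums nonnegative) equals C(k, k/2) if k is even, and (1/2) * C(k+1, (k+1)/2) if k is odd. -/
/-- Number of up-steps (`true`) among the first `i` steps of `w`. -/
def ups {n : ℕ} (w : Fin n → Bool) (i : ℕ) : ℕ :=
  (Finset.univ.filter fun j : Fin n => (j : ℕ) < i ∧ w j = true).card

/-- Number of down-steps (`false`) among the first `i` steps of `w`. -/
def downs {n : ℕ} (w : Fin n → Bool) (i : ℕ) : ℕ :=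
  (Finset.univ.filter fun j : Fin n => (j : ℕ) < i ∧ w j = false).card

/-- A left factor of a Dyck path: every prefix has at least as many ups as downs. -/
def IsLeftFactor {n : ℕ} (w : Fin n → Bool) : Prop :=
  ∀ i ≤ n, downs w i ≤ ups w i

/-- A Dyck word: a left factor with equally many ups and downs overall. -/
def IsDyckWord {n : ℕ} (w : Fin n → Bool) : Prop :=
  IsLeftFactor w ∧ ups w n = downs w n


open DyckStep

section Aux

lemma ups_eq_sum {n : ℕ} (w : Fin n → Bool) (i : ℕ) :
    ups w i = ∑ j : Fin n, if (j : ℕ) < i ∧ w j = true then 1 else 0 := by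
  rw [ups, Finset.card_filter]

lemma downs_eq_sum {n : ℕ} (w : Fin n → Bool) (i : ℕ) :
    downs w i = ∑ j : Fin n, if (j : ℕ) < i ∧ w j = false then 1 else 0 := by
  rw [downs, Finset.card_filter]

@[simp] lemma ups_zero {n : ℕ} (w : Fin n → Bool) : ups w 0 = 0 := by
  simp [ups]

@[simp] lemma downs_zero {n : ℕ} (w : Fin n → Bool) : downs w 0 = 0 := by
  simp [downs]

lemma ups_snoc {k : ℕ} (w : Fin k → Bool) (b : Bool) (i : ℕ) (h : i ≤ k) :
    ups (Fin.snoc w b) i = ups w i := by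
  rw [ups_eq_sum, ups_eq_sum, Fin.sum_univ_castSucc]
  simp only [Fin.snoc_castSucc, Fin.snoc_last, Fin.coe_castSucc, Fin.val_last]
  have : ¬ ((k : ℕ) < i ∧ b = true) := fun hc => absurd hc.1 (by omega)
  rw [if_neg this, add_zero]

lemma downs_snoc {k : ℕ} (w : Fin k → Bool) (b : Bool) (i : ℕ) (h : i ≤ k) :
    downs (Fin.snoc w b) i = downs w i := by
  rw [downs_eq_sum, downs_eq_sum, Fin.sum_univ_castSucc]
  simp only [Fin.snoc_castSucc, Fin.snoc_last, Fin.coe_castSucc, Fin.val_last]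
  have : ¬ ((k : ℕ) < i ∧ b = false) := fun hc => absurd hc.1 (by omega)
  rw [if_neg this, add_zero]

lemma ups_snoc_top {k : ℕ} (w : Fin k → Bool) (b : Bool) :
    ups (Fin.snoc w b) (k + 1) = ups w k + (if b = true then 1 else 0) := by
  rw [ups_eq_sum, ups_eq_sum, Fin.sum_univ_castSucc]
  simp only [Fin.snoc_castSucc, Fin.snoc_last, Fin.coe_castSucc, Fin.val_last]
  congr 1
  · apply Finset.sum_congr rfl
    intro j _
    by_cases hw : w j = true <;> simp [hw, j.isLt, Nat.lt_succ_of_lt]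
  · simp

lemma downs_snoc_top {k : ℕ} (w : Fin k → Bool) (b : Bool) :
    downs (Fin.snoc w b) (k + 1) = downs w k + (if b = false then 1 else 0) := by
  rw [downs_eq_sum, downs_eq_sum, Fin.sum_univ_castSucc]
  simp only [Fin.snoc_castSucc, Fin.snoc_last, Fin.coe_castSucc, Fin.val_last]
  congr 1
  · apply Finset.sum_congr rfl
    intro j _
    by_cases hw : w j = false <;> simp [hw, j.isLt, Nat.lt_succ_of_lt]
  · simp

lemma ups_add_downs {n : ℕ} (w : Fin n → Bool) : ups w n + downs w n = n := by
  rw [ups_eq_sum, downs_eq_sum, ← Finset.sum_add_distrib]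
  have h : ∀ j : Fin n, ((if (j : ℕ) < n ∧ w j = true then 1 else 0) +
      (if (j : ℕ) < n ∧ w j = false then 1 else 0)) = 1 := by
    intro j
    by_cases hw : w j = true <;> simp_all [j.isLt]
  rw [Finset.sum_congr rfl fun j _ => h j]
  simp

lemma ups_stab {n : ℕ} (w : Fin n → Bool) (i : ℕ) (h : n ≤ i) : ups w i = ups w n := by
  rw [ups, ups]
  congr 1
  apply Finset.filter_congr
  intro j _
  have := j.isLt
  constructor <;> (rintro ⟨-, hj⟩; exact ⟨by omega, hj⟩)

lemma downs_stab {n : ℕ} (w : Fin n → Bool) (i : ℕ) (h : n ≤ i) : downs w i = downs w n := by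
  rw [downs, downs]
  congr 1
  apply Finset.filter_congr
  intro j _
  have := j.isLt
  constructor <;> (rintro ⟨-, hj⟩; exact ⟨by omega, hj⟩)

lemma ups_succ {n : ℕ} (w : Fin n → Bool) (i : ℕ) (h : i < n) :
    ups w (i + 1) = ups w i + (if w ⟨i, h⟩ = true then 1 else 0) := by
  rw [ups_eq_sum, ups_eq_sum]
  have h2 : (∑ j : Fin n, if (j : ℕ) = i ∧ w j = true then 1 else 0)
      = (if w ⟨i, h⟩ = true then 1 else 0) := by
    rw [Finset.sum_eq_single (⟨i, h⟩ : Fin n)]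
    · simp
    · intro b _ hb
      rw [if_neg]
      rintro ⟨hbi, -⟩
      exact hb (Fin.ext hbi)
    · intro hmem
      exact absurd (Finset.mem_univ _) hmem
  rw [← h2, ← Finset.sum_add_distrib]
  apply Finset.sum_congr rfl
  intro j _
  by_cases hw : w j = true
  · simp only [hw, and_true]
    by_cases hji : (j : ℕ) < i
    · rw [if_pos (by omega), if_pos hji, if_neg (by omega)]
    · by_cases hje : (j : ℕ) = i
      · rw [if_pos (by omega), if_neg (by omega), if_pos hje]
      · rw [if_neg (by omega), if_neg (by omega), if_neg hje]
  · simp [hw]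

lemma downs_succ {n : ℕ} (w : Fin n → Bool) (i : ℕ) (h : i < n) :
    downs w (i + 1) = downs w i + (if w ⟨i, h⟩ = false then 1 else 0) := by
  rw [downs_eq_sum, downs_eq_sum]
  have h2 : (∑ j : Fin n, if (j : ℕ) = i ∧ w j = false then 1 else 0)
      = (if w ⟨i, h⟩ = false then 1 else 0) := by
    rw [Finset.sum_eq_single (⟨i, h⟩ : Fin n)]
    · simp
    · intro b _ hb
      rw [if_neg]
      rintro ⟨hbi, -⟩
      exact hb (Fin.ext hbi)
    · intro hmem
      exact absurd (Finset.mem_univ _) hmem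
  rw [← h2, ← Finset.sum_add_distrib]
  apply Finset.sum_congr rfl
  intro j _
  by_cases hw : w j = false
  · simp only [hw, and_true]
    by_cases hji : (j : ℕ) < i
    · rw [if_pos (by omega), if_pos hji, if_neg (by omega)]
    · by_cases hje : (j : ℕ) = i
      · rw [if_pos (by omega), if_neg (by omega), if_pos hje]
      · rw [if_neg (by omega), if_neg (by omega), if_neg hje]
  · simp [hw]

lemma isLeftFactor_snoc_iff {k : ℕ} (w : Fin k → Bool) (b : Bool) :
    IsLeftFactor (Fin.snoc w b) ↔
      IsLeftFactor w ∧ (b = true ∨ ups w k ≠ downs w k) := by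
  constructor
  · intro h
    have hw : IsLeftFactor w := fun i hi => by
      have := h i (by omega); rwa [ups_snoc w b i hi, downs_snoc w b i hi] at this
    refine ⟨hw, ?_⟩
    by_contra hc
    push_neg at hc
    obtain ⟨hb, he⟩ := hc
    have := h (k + 1) le_rfl
    have hb' : b = false := by simpa using hb
    rw [ups_snoc_top, downs_snoc_top, hb'] at this
    simp at this
    omega
  · rintro ⟨hw, hb⟩ i hi
    rcases Nat.lt_or_ge i (k + 1) with hik | hik
    · rw [ups_snoc w b i (by omega), downs_snoc w b i (by omega)]
      exact hw i (by omega)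
    · have hik' : i = k + 1 := by omega
      subst hik'
      rw [ups_snoc_top, downs_snoc_top]
      have h1 := hw k le_rfl
      rcases hb with hb | hb
      · rw [hb]; simp; omega
      · have : downs w k < ups w k := lt_of_le_of_ne h1 (Ne.symm hb)
        cases b <;> simp <;> omega

noncomputable instance instDecLF {n : ℕ} (w : Fin n → Bool) : Decidable (IsLeftFactor w) := by
  unfold IsLeftFactor; infer_instance

noncomputable instance instDecDW {n : ℕ} (w : Fin n → Bool) : Decidable (IsDyckWord w) := by
  unfold IsDyckWord; infer_instance

/-- Number of left factors of length `k`. -/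
noncomputable def Lc (k : ℕ) : ℕ :=
  (Finset.univ.filter fun w : Fin k → Bool => IsLeftFactor w).card

/-- Number of Dyck words of length `k`. -/
noncomputable def Dc (k : ℕ) : ℕ :=
  (Finset.univ.filter fun w : Fin k → Bool => IsDyckWord w).card

lemma natCard_eq_Lc (k : ℕ) :
    Nat.card {w : Fin k → Bool // IsLeftFactor w} = Lc k := by
  rw [Nat.card_eq_fintype_card, Fintype.card_subtype, Lc]

lemma Lc_zero : Lc 0 = 1 := by
  rw [Lc]
  have h2 : (Finset.univ.filter fun w : Fin 0 → Bool => IsLeftFactor w) = Finset.univ := by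
    apply Finset.filter_true_of_mem
    intro w _ i _
    have h3 : downs w i = 0 := by simp [downs]
    omega
  rw [h2, Finset.card_univ]
  simp

lemma Dc_filter (k : ℕ) :
    Dc k = ((Finset.univ.filter fun w : Fin k → Bool => IsLeftFactor w).filter
      fun w => ups w k = downs w k).card := by
  rw [Dc, Finset.filter_filter]
  rfl

lemma Lc_rec (k : ℕ) : Lc (k + 1) + Dc k = 2 * Lc k := by
  classical
  set T := Finset.univ.filter fun w : Fin k → Bool => IsLeftFactor w with hT
  have hmap : ∀ w' ∈ Finset.univ.filter fun w : Fin (k+1) → Bool => IsLeftFactor w,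
      Fin.init w' ∈ T := by
    intro w' hw'
    rw [Finset.mem_filter] at hw' ⊢
    refine ⟨Finset.mem_univ _, ?_⟩
    have h := hw'.2
    rw [← Fin.snoc_init_self w', isLeftFactor_snoc_iff] at h
    exact h.1
  have hfib : ∀ w ∈ T, ((Finset.univ.filter fun w' : Fin (k+1) → Bool => IsLeftFactor w').filter
      fun w' => Fin.init w' = w).card = if ups w k = downs w k then 1 else 2 := by
    intro w hw
    have hLF : IsLeftFactor w := (Finset.mem_filter.mp hw).2
    by_cases hd : ups w k = downs w k
    · rw [if_pos hd]
      have h5 : ((Finset.univ.filter fun w' : Fin (k+1) → Bool => IsLeftFactor w').filter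
          fun w' => Fin.init w' = w) = {Fin.snoc w true} := by
        ext x
        simp only [Finset.mem_filter, Finset.mem_univ, true_and, Finset.mem_singleton]
        constructor
        · rintro ⟨hx, hinit⟩
          rw [← Fin.snoc_init_self x, hinit, isLeftFactor_snoc_iff] at hx
          have hb : x (Fin.last k) = true := hx.2.resolve_right (fun h => h hd)
          rw [← Fin.snoc_init_self x, hinit, hb]
        · rintro rfl
          refine ⟨(isLeftFactor_snoc_iff w true).mpr ⟨hLF, Or.inl rfl⟩, ?_⟩
          simp [Fin.init_snoc]
      rw [h5, Finset.card_singleton]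
    · rw [if_neg hd]
      have h5 : ((Finset.univ.filter fun w' : Fin (k+1) → Bool => IsLeftFactor w').filter
          fun w' => Fin.init w' = w) = {Fin.snoc w true, Fin.snoc w false} := by
        ext x
        simp only [Finset.mem_filter, Finset.mem_univ, true_and, Finset.mem_insert,
          Finset.mem_singleton]
        constructor
        · rintro ⟨hx, hinit⟩
          rcases Bool.dichotomy (x (Fin.last k)) with hb | hb
          · right; rw [← Fin.snoc_init_self x, hinit, hb]
          · left; rw [← Fin.snoc_init_self x, hinit, hb]
        · rintro (rfl | rfl)
          · exact ⟨(isLeftFactor_snoc_iff w true).mpr ⟨hLF, Or.inl rfl⟩, by simp [Fin.init_snoc]⟩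
          · exact ⟨(isLeftFactor_snoc_iff w false).mpr ⟨hLF, Or.inr hd⟩, by simp [Fin.init_snoc]⟩
      rw [h5, Finset.card_insert_of_notMem, Finset.card_singleton]
      intro hmem
      rw [Finset.mem_singleton] at hmem
      have := congrFun hmem (Fin.last k)
      simp at this
  have hLc1 : Lc (k + 1) = ∑ w ∈ T, if ups w k = downs w k then 1 else 2 := by
    rw [Lc, Finset.card_eq_sum_card_fiberwise hmap]
    exact Finset.sum_congr rfl hfib
  rw [hLc1, Dc_filter]
  rw [Finset.sum_ite, Finset.sum_const, Finset.sum_const, smul_eq_mul, smul_eq_mul]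
  have hsplit := Finset.card_filter_add_card_filter_not
    (s := T) (p := fun w => ups w k = downs w k)
  rw [Lc]
  rw [← hT]
  omega

/-- The list of Dyck steps associated to a word. -/
def toD {n : ℕ} (w : Fin n → Bool) : List DyckStep :=
  List.ofFn fun j => if w j = true then U else D

@[simp] lemma toD_length {n : ℕ} (w : Fin n → Bool) : (toD w).length = n := by
  simp [toD]

lemma count_U_take {n : ℕ} (w : Fin n → Bool) (i : ℕ) :
    ((toD w).take i).count U = ups w i := by
  induction i with
  | zero => simp
  | succ i ih =>
    rcases Nat.lt_or_ge i n with h | h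
    · rw [List.take_succ, List.count_append, ih]
      have hget : (toD w)[i]? = some (if w ⟨i, h⟩ = true then U else D) := by
        rw [toD, List.getElem?_ofFn]
        simp [List.ofFnNthVal, h]
      rw [hget, ups_succ w i h]
      by_cases hw : w ⟨i, h⟩ = true <;> simp [hw]
    · rw [List.take_succ, List.count_append, ih]
      have hget : (toD w)[i]? = none := by
        rw [List.getElem?_eq_none]
        simp [h]
      rw [hget]
      simp only [Option.toList_none, List.count_nil, add_zero]
      rw [ups_stab w (i+1) (by omega), ups_stab w i h]

lemma count_D_take {n : ℕ} (w : Fin n → Bool) (i : ℕ) :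
    ((toD w).take i).count D = downs w i := by
  induction i with
  | zero => simp
  | succ i ih =>
    rcases Nat.lt_or_ge i n with h | h
    · rw [List.take_succ, List.count_append, ih]
      have hget : (toD w)[i]? = some (if w ⟨i, h⟩ = true then U else D) := by
        rw [toD, List.getElem?_ofFn]
        simp [List.ofFnNthVal, h]
      rw [hget, downs_succ w i h]
      by_cases hw : w ⟨i, h⟩ = true <;> simp [hw, Bool.not_eq_true]
    · rw [List.take_succ, List.count_append, ih]
      have hget : (toD w)[i]? = none := by
        rw [List.getElem?_eq_none]
        simp [h]
      rw [hget]
      simp only [Option.toList_none, List.count_nil, add_zero]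
      rw [downs_stab w (i+1) (by omega), downs_stab w i h]

lemma count_U_toD {n : ℕ} (w : Fin n → Bool) : (toD w).count U = ups w n := by
  have := count_U_take w n
  rwa [List.take_of_length_le (by simp)] at this

lemma count_D_toD {n : ℕ} (w : Fin n → Bool) : (toD w).count D = downs w n := by
  have := count_D_take w n
  rwa [List.take_of_length_le (by simp)] at this

/-- The Dyck word associated to a Boolean Dyck word. -/
def toDyckWord {n : ℕ} (w : Fin n → Bool) (hw : IsDyckWord w) : DyckWord where
  toList := toD w
  count_U_eq_count_D := by rw [count_U_toD, count_D_toD, hw.2]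
  count_D_le_count_U i := by
    rw [count_U_take, count_D_take]
    rcases le_or_gt i n with h | h
    · exact hw.1 i h
    · rw [ups_stab w i (by omega), downs_stab w i (by omega), hw.2]

lemma semilength_pos {p : DyckWord} {m : ℕ} (h : p.semilength = m) :
    p.toList.length = 2 * m := by
  rw [← p.two_mul_semilength_eq_length, h]

/-- The Boolean word associated to a Dyck word of semilength `m`. -/
def fromD (m : ℕ) (p : DyckWord) (hp : p.semilength = m) : Fin (2 * m) → Bool :=
  fun j => decide (p.toList.get (Fin.cast (semilength_pos hp).symm j) = U)

lemma toD_fromD (m : ℕ) (p : DyckWord) (hp : p.semilength = m) :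
    toD (fromD m p hp) = p.toList := by
  apply List.ext_get
  · simp [semilength_pos hp]
  · intro i h1 h2
    simp only [toD, fromD, List.get_eq_getElem, List.getElem_ofFn, Fin.coe_cast]
    rcases (p.toList[(i : ℕ)]'h2).dichotomy with hs | hs <;> simp [hs]

lemma isDyckWord_fromD (m : ℕ) (p : DyckWord) (hp : p.semilength = m) :
    IsDyckWord (fromD m p hp) := by
  have hkey := toD_fromD m p hp
  constructor
  · intro i hi
    have hU := count_U_take (fromD m p hp) i
    have hD := count_D_take (fromD m p hp) i
    rw [hkey] at hU hD
    rw [← hU, ← hD]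
    exact p.count_D_le_count_U i
  · have hU := count_U_toD (fromD m p hp)
    have hD := count_D_toD (fromD m p hp)
    rw [hkey] at hU hD
    rw [← hU, ← hD]
    exact p.count_U_eq_count_D

/-- Boolean Dyck words of length `2 * m` are equivalent to Dyck words of semilength `m`. -/
noncomputable def dyckEquiv (m : ℕ) :
    {w : Fin (2 * m) → Bool // IsDyckWord w} ≃ {p : DyckWord // p.semilength = m} where
  toFun w := ⟨toDyckWord w.1 w.2, by
    have h1 := ups_add_downs w.1
    have h2 := w.2.2
    show (toD w.1).count U = m
    rw [count_U_toD]
    omega⟩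
  invFun p := ⟨fromD m p.1 p.2, isDyckWord_fromD m p.1 p.2⟩
  left_inv w := by
    apply Subtype.ext
    funext j
    show decide ((toD w.1).get _ = U) = w.1 j
    simp only [toD, List.get_eq_getElem, List.getElem_ofFn, Fin.coe_cast]
    change decide ((toD w.1)[(j : ℕ)]'(by simp) = U) = w.1 j
    rcases Bool.dichotomy (w.1 j) with hb | hb <;> simp [toD, Fin.eta, hb]
  right_inv p := by
    apply Subtype.ext
    apply DyckWord.ext
    exact toD_fromD m p.1 p.2

lemma Dc_even (m : ℕ) : Dc (2 * m) = catalan m := by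
  classical
  rw [Dc, ← Fintype.card_subtype]
  rw [Fintype.card_congr (dyckEquiv m)]
  exact DyckWord.card_dyckWord_semilength_eq_catalan m

lemma Dc_odd (m : ℕ) : Dc (2 * m + 1) = 0 := by
  rw [Dc, Finset.card_eq_zero]
  rw [Finset.filter_eq_empty_iff]
  intro w _
  intro hdw
  have h1 := ups_add_downs w
  have h2 := hdw.2
  omega

lemma odd_step (m : ℕ) (h : Lc (2 * m) = (2 * m).choose m) :
    Lc (2 * m + 1) = (2 * m + 1).choose m := by
  have hrec := Lc_rec (2 * m)
  rw [Dc_even, h] at hrec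
  have hcat : (m + 1) * catalan m = (2 * m).choose m := by
    rw [succ_mul_catalan_eq_centralBinom, Nat.centralBinom]
  have hch : (2 * m + 1) * (2 * m).choose m = (2 * m + 1).choose (m + 1) * (m + 1) := by
    have := Nat.add_one_mul_choose_eq (2 * m) m
    simpa using this
  have hsymm : (2 * m + 1).choose (m + 1) = (2 * m + 1).choose m := by
    have h1 : (2 * m + 1) - m = m + 1 := by omega
    have := Nat.choose_symm (n := 2 * m + 1) (k := m) (by omega)
    rw [h1] at this
    exact this
  rw [hsymm] at hch
  apply Nat.eq_of_mul_eq_mul_left (show 0 < m + 1 by omega)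
  nlinarith [hrec, hcat, hch]

lemma even_step (m : ℕ) (h : Lc (2 * m + 1) = (2 * m + 1).choose m) :
    Lc (2 * m + 2) = (2 * m + 2).choose (m + 1) := by
  have hrec := Lc_rec (2 * m + 1)
  rw [Dc_odd, h] at hrec
  rw [show 2 * m + 1 + 1 = 2 * m + 2 from by omega] at hrec
  have hch : (2 * m + 2).choose (m + 1) = (2 * m + 1).choose m + (2 * m + 1).choose (m + 1) :=
    Nat.choose_succ_succ (2 * m + 1) m
  have hsymm : (2 * m + 1).choose (m + 1) = (2 * m + 1).choose m := by
    have h1 : (2 * m + 1) - m = m + 1 := by omega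
    have := Nat.choose_symm (n := 2 * m + 1) (k := m) (by omega)
    rw [h1] at this
    exact this
  omega

lemma Lc_even (m : ℕ) : Lc (2 * m) = (2 * m).choose m := by
  induction m with
  | zero => simpa using Lc_zero
  | succ m ih =>
    have h1 := even_step m (odd_step m ih)
    have e1 : 2 * (m + 1) = 2 * m + 2 := by ring
    rw [e1]
    exact h1

lemma Lc_odd (m : ℕ) : Lc (2 * m + 1) = (2 * m + 1).choose m :=
  odd_step m (Lc_even m)

end Aux

/-- The number of left factors of Dyck paths of length `k` equals `C(k, k/2)` if `k` is
even, and `(1/2) * C(k+1, (k+1)/2)` if `k` is odd. -/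
theorem stmt1 (k : ℕ) :
    Nat.card {w : Fin k → Bool // IsLeftFactor w} =
      if Even k then k.choose (k / 2) else (k + 1).choose ((k + 1) / 2) / 2 := by
  rw [natCard_eq_Lc]
  rcases Nat.even_or_odd k with ⟨m, hm⟩ | ⟨m, hm⟩
  · subst hm
    rw [if_pos ⟨m, rfl⟩]
    have e1 : m + m = 2 * m := by ring
    rw [e1, Lc_even]
    congr 1
    omega
  · subst hm
    rw [if_neg (by simp [Nat.even_add_one, parity_simps])]
    rw [Lc_odd]
    have e2 : (2 * m + 1 + 1) = 2 * (m + 1) := by ring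
    have hch : (2 * m + 2).choose (m + 1) = 2 * (2 * m + 1).choose m := by
      have hcc : (2 * m + 2).choose (m + 1)
          = (2 * m + 1).choose m + (2 * m + 1).choose (m + 1) :=
        Nat.choose_succ_succ (2 * m + 1) m
      have hsymm : (2 * m + 1).choose (m + 1) = (2 * m + 1).choose m := by
        have h1 : (2 * m + 1) - m = m + 1 := by omega
        have := Nat.choose_symm (n := 2 * m + 1) (k := m) (by omega)
        rw [h1] at this
        exact this
      omega
    have hdiv : (2 * m + 1 + 1) / 2 = m + 1 := by omega
    rw [hdiv]
    have : (2 * m + 1 + 1).choose (m + 1) = (2 * m + 2).choose (m + 1) := by norm_num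
    rw [this, hch]
    omega
end

section
/- The number of Dyck words of length 2n that are palindromes under the involution reversing the word and swapping up-steps with down-steps equals the number of left factors of Dyck paths of length n. -/
/-- The involution on words reversing the word and swapping up-steps with down-steps. -/
def revSwap {n : ℕ} (w : Fin n → Bool) : Fin n → Bool := fun j => ! w j.rev

/-- counting both kinds of steps uniformly -/
def cnt {n : ℕ} (w : Fin n → Bool) (i : ℕ) (b : Bool) : ℕ :=
  (Finset.univ.filter fun j : Fin n => (j : ℕ) < i ∧ w j = b).card

lemma ups_eq_cnt {n : ℕ} (w : Fin n → Bool) (i : ℕ) : ups w i = cnt w i true := rfl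
lemma downs_eq_cnt {n : ℕ} (w : Fin n → Bool) (i : ℕ) : downs w i = cnt w i false := rfl

lemma cnt_agree {n m : ℕ} (h : n ≤ m) (w : Fin n → Bool) (u : Fin m → Bool)
    (hag : ∀ j : Fin n, u ⟨j, lt_of_lt_of_le j.2 h⟩ = w j)
    {i : ℕ} (hi : i ≤ n) (b : Bool) : cnt u i b = cnt w i b := by
  unfold cnt
  apply Finset.card_bij' (i := fun (j : Fin m) hj =>
      (⟨(j : ℕ), lt_of_lt_of_le (Finset.mem_filter.mp hj).2.1 hi⟩ : Fin n))
    (j := fun (j : Fin n) _ => (⟨(j : ℕ), lt_of_lt_of_le j.2 h⟩ : Fin m))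
  case hi =>
    intro a ha
    rw [Finset.mem_filter]
    have h1 := (Finset.mem_filter.mp ha).2
    exact ⟨Finset.mem_univ _,
      h1.1, (hag ⟨(a : ℕ), lt_of_lt_of_le h1.1 hi⟩).symm.trans h1.2⟩
  case hj =>
    intro a ha
    rw [Finset.mem_filter]
    have h1 := (Finset.mem_filter.mp ha).2
    exact ⟨Finset.mem_univ _, h1.1, (hag a).trans h1.2⟩
  case left_inv =>
    intro a ha
    exact Fin.ext rfl
  case right_inv =>
    intro a ha
    exact Fin.ext rfl

lemma cnt_split {m : ℕ} (u : Fin m → Bool) (i : ℕ) (b : Bool) :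
    cnt u m b = cnt u i b +
      (Finset.univ.filter fun j : Fin m => ¬ ((j : ℕ) < i) ∧ u j = b).card := by
  unfold cnt
  have hm : (Finset.univ.filter fun j : Fin m => (j : ℕ) < m ∧ u j = b)
      = Finset.univ.filter (fun j : Fin m => u j = b) := by
    apply Finset.filter_congr
    intro x _
    simp [x.2]
  rw [hm, ← Finset.card_filter_add_card_filter_not
    (s := Finset.univ.filter fun j : Fin m => u j = b) (p := fun j => (j : ℕ) < i)]
  congr 1
  · rw [Finset.filter_filter]
    congr 1
    apply Finset.filter_congr
    intro x _
    exact and_comm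
  · rw [Finset.filter_filter]
    congr 1
    apply Finset.filter_congr
    intro x _
    exact and_comm

lemma cnt_rev {m : ℕ} (u : Fin m → Bool) (hu : revSwap u = u) {i : ℕ} (hi : i ≤ m) (b : Bool) :
    (Finset.univ.filter fun j : Fin m => ¬ ((j : ℕ) < m - i) ∧ u j = b).card
      = cnt u i (!b) := by
  have key : ∀ j : Fin m, u j.rev = ! u j := by
    intro j
    have := congrFun hu j
    simp only [revSwap] at this
    rw [← this]; simp
  unfold cnt
  apply Finset.card_nbij' (i := Fin.rev) (j := Fin.rev)
  · intro a ha
    simp only [Finset.mem_coe, Finset.mem_filter, Finset.mem_univ, true_and, Fin.val_rev] at ha ⊢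
    have h2 := a.2
    refine ⟨by omega, ?_⟩
    rw [key a, ha.2]
  · intro a ha
    simp only [Finset.mem_coe, Finset.mem_filter, Finset.mem_univ, true_and, Fin.val_rev] at ha ⊢
    have h2 := a.2
    refine ⟨by omega, ?_⟩
    rw [key a, ha.2]; simp
  · intro a _; simp
  · intro a _; simp

lemma cnt_balance {m : ℕ} (u : Fin m → Bool) (hu : revSwap u = u) (b : Bool) :
    cnt u m b = cnt u m (!b) := by
  have h1 := cnt_split u 0 b
  have h2 := cnt_rev u hu (le_refl m) b
  rw [Nat.sub_self] at h2
  have h0 : cnt u 0 b = 0 := by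
    unfold cnt
    rw [Finset.card_eq_zero, Finset.filter_eq_empty_iff]
    intro x _; simp
  omega

/-- the extension of a word to a revSwap-palindrome of double length -/
def ext {n : ℕ} (w : Fin n → Bool) : Fin (2 * n) → Bool := fun j =>
  if h : (j : ℕ) < n then w ⟨j, h⟩ else ! w ⟨2 * n - 1 - j, by have := j.2; omega⟩

lemma ext_pal {n : ℕ} (w : Fin n → Bool) : revSwap (ext w) = ext w := by
  funext j
  simp only [revSwap, ext, Fin.val_rev]
  have h2 := j.2
  by_cases h : (j : ℕ) < n
  · have h3 : ¬ (2 * n - ((j : ℕ) + 1) < n) := by omega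
    rw [dif_neg h3, dif_pos h]
    simp only [Bool.not_not]
    congr 1
    exact Fin.ext (by simp; omega)
  · have h3 : 2 * n - ((j : ℕ) + 1) < n := by omega
    rw [dif_pos h3, dif_neg h]
    have hv : (⟨2 * n - ((j : ℕ) + 1), h3⟩ : Fin n)
        = ⟨2 * n - 1 - (j : ℕ), by omega⟩ := Fin.ext (by simp; omega)
    rw [hv]

lemma ext_agree {n : ℕ} (w : Fin n → Bool) (j : Fin n) :
    ext w ⟨(j : ℕ), by have := j.2; omega⟩ = w j := by
  simp only [ext, dif_pos j.2]

lemma sym_prefix {m : ℕ} (u : Fin m → Bool) (hu : revSwap u = u) {i : ℕ} (hi : i ≤ m) :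
    cnt u i false + cnt u (m - i) true = cnt u i true + cnt u (m - i) false := by
  have h1 := cnt_split u (m - i) true
  have h2 := cnt_split u (m - i) false
  have h3 := cnt_rev u hu hi true
  have h4 := cnt_rev u hu hi false
  have h5 := cnt_balance u hu true
  simp only [Bool.not_true, Bool.not_false] at *
  omega

lemma restr_lf {n : ℕ} (u : Fin (2 * n) → Bool) (hlf : IsLeftFactor u) :
    IsLeftFactor (fun j : Fin n => u ⟨(j : ℕ), by have := j.2; omega⟩) := by
  intro i hi
  rw [downs_eq_cnt, ups_eq_cnt,
    ← cnt_agree (by omega) _ u (fun j => rfl) hi false,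
    ← cnt_agree (by omega) _ u (fun j => rfl) hi true]
  exact hlf i (by omega)

lemma ext_dyck {n : ℕ} (w : Fin n → Bool) (hw : IsLeftFactor w) : IsDyckWord (ext w) := by
  have hpal := ext_pal w
  have agree : ∀ j : Fin n, ext w ⟨(j : ℕ), by have := j.2; omega⟩ = w j := ext_agree w
  constructor
  · intro i hi
    rw [downs_eq_cnt, ups_eq_cnt]
    by_cases h : i ≤ n
    · rw [cnt_agree (by omega) w (ext w) agree h false,
        cnt_agree (by omega) w (ext w) agree h true]
      exact hw i h
    · have hsym := sym_prefix (ext w) hpal (i := 2 * n - i) (by omega)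
      have hi' : 2 * n - (2 * n - i) = i := by omega
      rw [hi'] at hsym
      have h2 : 2 * n - i ≤ n := by omega
      have e1 := cnt_agree (by omega) w (ext w) agree h2 false
      have e2 := cnt_agree (by omega) w (ext w) agree h2 true
      have := hw (2 * n - i) h2
      rw [downs_eq_cnt, ups_eq_cnt] at this
      omega
  · rw [ups_eq_cnt, downs_eq_cnt]
    exact cnt_balance (ext w) hpal true

/-- The number of Dyck words of length `2n` that are palindromes under the
reverse-and-swap involution equals the number of left factors of Dyck paths of length `n`. -/
theorem stmt5 (n : ℕ) :
    Nat.card {w : Fin (2 * n) → Bool // IsDyckWord w ∧ revSwap w = w} =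
      Nat.card {w : Fin n → Bool // IsLeftFactor w} := by
  apply Nat.card_congr
  refine ⟨fun u => ⟨fun j => u.1 ⟨(j : ℕ), by have := j.2; omega⟩, restr_lf u.1 u.2.1.1⟩,
    fun w => ⟨ext w.1, ext_dyck w.1 w.2, ext_pal w.1⟩, ?_, ?_⟩
  · -- left inverse
    rintro ⟨u, hd, hpal⟩
    ext j
    simp only [ext]
    by_cases h : (j : ℕ) < n
    · rw [dif_pos h]
    · rw [dif_neg h]
      have key : ∀ k : Fin (2 * n), u k.rev = ! u k := by
        intro k
        have := congrFun hpal k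
        simp only [revSwap] at this
        rw [← this]; simp
      have h2 := j.2
      have hr : (⟨2 * n - 1 - (j : ℕ), by omega⟩ : Fin (2 * n)) = j.rev := by
        apply Fin.ext
        simp only [Fin.val_rev]
        omega
      rw [hr, key j]
      simp
  · -- right inverse
    rintro ⟨w, hw⟩
    ext j
    exact ext_agree w j
end

section
/- The peaks-and-valleys encoding is a bijection: for every n ≥ 1, Dyck paths of length 2n are in bijection with pairs of sequences (a_1,...,a_k), (b_1,...,b_{k-1}) of positive integers (for some k ≥ 1) satisfying b_i ≤ min(a_i, a_{i+1}) for all i, and sum a_i - sum b_j + (k-1) = n. -/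
/-- The height of the path after its first `i` steps (`true` = up-step, `false` = down-step). -/
def heightAt (l : List Bool) (i : ℕ) : ℤ :=
  ((l.take i).count true : ℤ) - ((l.take i).count false : ℤ)

/-- A Dyck word: all partial heights are nonnegative and the final height is `0`. -/
def IsDyckList (l : List Bool) : Prop :=
  (∀ i ≤ l.length, 0 ≤ heightAt l i) ∧ heightAt l l.length = 0

/-- The list of peak heights of a path, read left to right: a peak is an up-step
immediately followed by a down-step. -/
def peakHeights (l : List Bool) : List ℤ :=
  ((List.range (l.length - 1)).filter fun i =>
      l.getD i false && !(l.getD (i + 1) false)).map fun i => heightAt l (i + 1)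

/-- The list of valley heights of a path, read left to right: a valley is a down-step
immediately followed by an up-step. -/
def valleyHeights (l : List Bool) : List ℤ :=
  ((List.range (l.length - 1)).filter fun i =>
      !(l.getD i false) && l.getD (i + 1) false).map fun i => heightAt l (i + 1)

lemma heightAt_zero (l : List Bool) : heightAt l 0 = 0 := by simp [heightAt]

lemma heightAt_append_left (x y : List Bool) {i : ℕ} (h : i ≤ x.length) :
    heightAt (x ++ y) i = heightAt x i := by
  simp [heightAt, List.take_append_of_le_length h]

lemma heightAt_append (x y : List Bool) (i : ℕ) :
    heightAt (x ++ y) (x.length + i) = heightAt x x.length + heightAt y i := by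
  simp [heightAt, List.take_append, List.count_append, List.take_length,
    List.take_of_length_le (l := x) (Nat.le_add_right x.length i)]
  ring

lemma heightAt_length (l : List Bool) :
    heightAt l l.length = (l.count true : ℤ) - (l.count false : ℤ) := by
  simp [heightAt, List.take_length]

lemma heightAt_replicate_true (u : ℕ) {i : ℕ} (h : i ≤ u) :
    heightAt (List.replicate u true) i = i := by
  simp [heightAt, List.take_replicate, List.count_replicate, Nat.min_eq_left h]

lemma heightAt_block_left (u d : ℕ) {i : ℕ} (h : i ≤ u) :
    heightAt (List.replicate u true ++ List.replicate d false) i = i := by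
  rw [heightAt_append_left _ _ (by simpa using h), heightAt_replicate_true u h]

lemma heightAt_block_right (u d : ℕ) {j : ℕ} (h : j ≤ d) :
    heightAt (List.replicate u true ++ List.replicate d false) (u + j) = (u : ℤ) - j := by
  have := heightAt_append (List.replicate u true) (List.replicate d false) j
  simp only [List.length_replicate] at this
  rw [this, heightAt_replicate_true u le_rfl]
  simp [heightAt, List.take_replicate, List.count_replicate, Nat.min_eq_left h]
  ring

lemma heightAt_block_total (u d : ℕ) :
    heightAt (List.replicate u true ++ List.replicate d false) (u + d) = (u : ℤ) - d :=
  heightAt_block_right u d le_rfl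

lemma filter_range_single {n m : ℕ} (h : m < n) :
    (List.range n).filter (fun i => i == m) = [m] := by
  induction n with
  | zero => omega
  | succ k ih =>
    rw [List.range_succ, List.filter_append]
    rcases Nat.lt_or_ge m k with h' | h'
    · rw [ih h']
      have : k ≠ m := by omega
      simp [this]
    · have : m = k := by omega
      subst this
      have : (List.range m).filter (fun i => i == m) = [] := by
        rw [List.filter_eq_nil_iff]
        intro a ha
        simp only [List.mem_range] at ha
        simp; omega
      simp [this]

lemma getD_block (u d i : ℕ) :
    (List.replicate u true ++ List.replicate d false).getD i false = decide (i < u) := by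
  rcases Nat.lt_or_ge i u with h | h
  · rw [List.getD_append _ _ _ _ (by simpa using h),
      List.getD_eq_getElem (List.replicate u true) false (by simpa using h)]
    simp [h]
  · rw [List.getD_append_right _ _ _ _ (by simpa using h)]
    have : ¬ (i < u) := by omega
    rcases Nat.lt_or_ge (i - u) d with h2 | h2
    · rw [List.getD_eq_getElem (List.replicate d false) false (by simpa using h2)]
      simp [this]
    · rw [List.getD_eq_default _ _ (by simpa using h2)]
      simp [this]

lemma peaks_block {u d : ℕ} (hu : 1 ≤ u) (hd : 1 ≤ d) :
    peakHeights (List.replicate u true ++ List.replicate d false) = [(u : ℤ)] := by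
  unfold peakHeights
  have hlen : (List.replicate u true ++ List.replicate d false).length = u + d := by simp
  rw [hlen]
  have hcong : ((List.range (u + d - 1)).filter fun i =>
      (List.replicate u true ++ List.replicate d false).getD i false &&
        !((List.replicate u true ++ List.replicate d false).getD (i + 1) false)) =
      (List.range (u + d - 1)).filter (fun i => i == u - 1) := by
    apply List.filter_congr
    intro i _
    rw [getD_block, getD_block]
    rcases Nat.lt_or_ge i u with h | h
    · rcases Nat.lt_or_ge (i+1) u with h2 | h2
      · have : i ≠ u - 1 := by omega
        simp [h, h2, this]
      · have : i = u - 1 := by omega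
        have h2' : ¬ (i + 1 < u) := by omega
        simp [h, h2', this]
        omega
    · have h' : ¬ (i < u) := by omega
      have : i ≠ u - 1 := by omega
      simp [h', this]
  rw [hcong, filter_range_single (by omega)]
  have : u - 1 + 1 = u := by omega
  rw [List.map_singleton, this, heightAt_block_left u d le_rfl]

lemma valleys_block {u d : ℕ} :
    valleyHeights (List.replicate u true ++ List.replicate d false) = [] := by
  unfold valleyHeights
  have : ((List.range ((List.replicate u true ++ List.replicate d false).length - 1)).filter fun i =>
      !((List.replicate u true ++ List.replicate d false).getD i false) &&
        (List.replicate u true ++ List.replicate d false).getD (i + 1) false) = [] := by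
    rw [List.filter_eq_nil_iff]
    intro i _
    rw [getD_block, getD_block]
    rcases Nat.lt_or_ge i u with h | h
    · simp [h]
    · have h2 : ¬ (i + 1 < u) := by omega
      simp [h2]
  rw [this, List.map_nil]

lemma seg_append (q : Bool → Bool → Bool) (x y : List Bool) (hx : x ≠ []) (hy : y ≠ []) :
    ((List.range ((x ++ y).length - 1)).filter fun i =>
        q ((x ++ y).getD i false) ((x ++ y).getD (i + 1) false)).map
        (fun i => heightAt (x ++ y) (i + 1)) =
      (((List.range (x.length - 1)).filter fun i =>
        q (x.getD i false) (x.getD (i + 1) false)).map (fun i => heightAt x (i + 1))) ++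
      (if q (x.getD (x.length - 1) false) (y.getD 0 false) then [heightAt x x.length] else []) ++
      (((List.range (y.length - 1)).filter fun i =>
        q (y.getD i false) (y.getD (i + 1) false)).map
        (fun i => heightAt y (i + 1) + heightAt x x.length)) := by
  have hm : 1 ≤ x.length := List.length_pos_iff.mpr hx
  have hk : 1 ≤ y.length := List.length_pos_iff.mpr hy
  have hL : (x ++ y).length - 1 = x.length + (y.length - 1) := by
    simp [List.length_append]; omega
  rw [hL, List.range_add, List.filter_append, List.map_append]
  have hRm : List.range x.length = List.range (x.length - 1) ++ [x.length - 1] := by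
    conv_lhs => rw [show x.length = (x.length - 1) + 1 by omega]
    rw [List.range_succ]
  rw [hRm, List.filter_append, List.map_append]
  congr 1
  · congr 1
    -- part A
    · have e1 : ∀ i ∈ List.range (x.length - 1),
          (q ((x ++ y).getD i false) ((x ++ y).getD (i + 1) false)) =
          (q (x.getD i false) (x.getD (i + 1) false)) := by
        intro i hi
        simp only [List.mem_range] at hi
        rw [List.getD_append _ _ _ _ (by omega), List.getD_append _ _ _ _ (by omega)]
      rw [List.filter_congr e1]
      apply List.map_congr_left
      intro i hi
      have hi' : i ∈ List.range (x.length - 1) := List.mem_of_mem_filter hi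
      simp only [List.mem_range] at hi'
      exact heightAt_append_left x y (by omega)
    -- part B (junction)
    · rw [List.filter_singleton]
      have g1 : (x ++ y).getD (x.length - 1) false = x.getD (x.length - 1) false :=
        List.getD_append _ _ _ _ (by omega)
      have g2 : (x ++ y).getD (x.length - 1 + 1) false = y.getD 0 false := by
        rw [show x.length - 1 + 1 = x.length by omega]
        rw [List.getD_append_right _ _ _ _ le_rfl]
        simp
      rw [g1, g2]
      by_cases hq : q (x.getD (x.length - 1) false) (y.getD 0 false) = true
      · rw [hq]
        simp only [cond_true, if_true, List.map_singleton]
        congr 1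
        rw [show x.length - 1 + 1 = x.length by omega]
        have := heightAt_append x y 0
        rw [heightAt_zero] at this
        simpa using this
      · rw [Bool.not_eq_true] at hq
        rw [hq]
        simp
  -- part C
  · rw [List.filter_map]
    rw [List.map_map]
    have e3 : ((List.range (y.length - 1)).filter
        ((fun i => q ((x ++ y).getD i false) ((x ++ y).getD (i + 1) false)) ∘
          (fun j => x.length + j))) =
        ((List.range (y.length - 1)).filter fun j => q (y.getD j false) (y.getD (j + 1) false)) := by
      apply List.filter_congr
      intro j hj
      simp only [Function.comp]
      rw [List.getD_append_right _ _ _ _ (by omega), List.getD_append_right _ _ _ _ (by omega)]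
      congr 2 <;> omega
    rw [e3]
    apply List.map_congr_left
    intro j hj
    simp only [Function.comp]
    rw [show x.length + j + 1 = x.length + (j + 1) by omega, heightAt_append]
    ring

lemma peaks_append (x y : List Bool) (hx : x ≠ []) (hy : y ≠ [])
    (hlx : x.getD (x.length - 1) false = false) (hhy : y.getD 0 false = true) :
    peakHeights (x ++ y) =
      peakHeights x ++ (peakHeights y).map (· + heightAt x x.length) := by
  unfold peakHeights
  have h := seg_append (fun s t => s && !t) x y hx hy
  rw [hlx, hhy] at h
  rw [if_neg (by simp)] at h
  simp only [List.append_nil] at h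
  rw [List.map_map]
  exact h

lemma valleys_append (x y : List Bool) (hx : x ≠ []) (hy : y ≠ [])
    (hlx : x.getD (x.length - 1) false = false) (hhy : y.getD 0 false = true) :
    valleyHeights (x ++ y) =
      valleyHeights x ++ [heightAt x x.length] ++
        (valleyHeights y).map (· + heightAt x x.length) := by
  unfold valleyHeights
  have h := seg_append (fun s t => !s && t) x y hx hy
  rw [hlx, hhy] at h
  rw [if_pos (by simp)] at h
  rw [List.map_map]
  exact h

def dec : ℤ → List ℤ → List ℤ → List Bool
  | h, [a], [] => List.replicate (a - h).toNat true ++ List.replicate a.toNat false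
  | h, a :: a' :: as, b :: bs =>
      List.replicate (a - h).toNat true ++ List.replicate (a - b + 1).toNat false ++
        dec (b - 1) (a' :: as) bs
  | _, _, _ => []

lemma heightAt_block_bound {u d : ℕ} {i : ℕ} (h : i ≤ u + d) :
    min ((u : ℤ) - d) 0 ≤ heightAt (List.replicate u true ++ List.replicate d false) i := by
  rcases Nat.lt_or_ge i u with h1 | h1
  · rw [heightAt_block_left u d (le_of_lt h1)]
    have : (0:ℤ) ≤ i := Int.natCast_nonneg i
    omega
  · obtain ⟨j, rfl⟩ : ∃ j, i = u + j := ⟨i - u, by omega⟩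
    rw [heightAt_block_right u d (by omega)]
    have : (j : ℤ) ≤ d := by exact_mod_cast (by omega : j ≤ d)
    omega

lemma decP : ∀ (b a : List ℤ) (h : ℤ), 0 ≤ h → b.length + 1 = a.length →
    (∀ x ∈ a, 0 < x) → (∀ x ∈ b, 0 < x) →
    (∀ i < b.length, b.getD i 0 ≤ min (a.getD i 0) (a.getD (i + 1) 0)) →
    h + 1 ≤ a.getD 0 0 →
    (dec h a b ≠ [] ∧ (dec h a b).getD 0 false = true) ∧
    (∀ i ≤ (dec h a b).length, -h ≤ heightAt (dec h a b) i) ∧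
    heightAt (dec h a b) (dec h a b).length = -h ∧
    ((dec h a b).length : ℤ) = 2 * (a.sum - b.sum + b.length) - h ∧
    peakHeights (dec h a b) = a.map (· - h) ∧
    valleyHeights (dec h a b) = b.map (· - 1 - h) := by
  intro b
  induction b with
  | nil =>
    intro a h h0 hlen hapos hbpos hchain hhead
    match a with
    | [a₁] =>
      simp only [List.getD_cons_zero] at hhead
      set u := (a₁ - h).toNat with hu
      set d := a₁.toNat with hd
      have hu1 : 1 ≤ u := by omega
      have hd1 : 1 ≤ d := by omega
      have huz : (u : ℤ) = a₁ - h := by omega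
      have hdz : (d : ℤ) = a₁ := by omega
      have hdec : dec h [a₁] [] = List.replicate u true ++ List.replicate d false := rfl
      rw [hdec]
      have hlen' : (List.replicate u true ++ List.replicate d false).length = u + d := by simp
      refine ⟨⟨by simp [← List.length_pos_iff, hlen']; omega, ?_⟩, ?_, ?_, ?_, ?_, ?_⟩
      · rw [getD_block]; simp; omega
      · intro i hi
        rw [hlen'] at hi
        have := heightAt_block_bound (u := u) (d := d) (i := i) hi
        omega
      · rw [hlen', heightAt_block_total]; omega
      · rw [hlen']; push_cast; simp; omega
      · rw [peaks_block hu1 hd1]; simp; omega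
      · rw [valleys_block]; simp
  | cons b₁ bs ih =>
    intro a h h0 hlen hapos hbpos hchain hhead
    match a with
    | a₁ :: a₂ :: as =>
      simp only [List.getD_cons_zero] at hhead
      have hb₁pos : 0 < b₁ := hbpos b₁ (by simp)
      have hchain0 := hchain 0 (by simp)
      simp only [List.getD_cons_zero, List.getD_cons_succ] at hchain0
      have ih' := ih (a₂ :: as) (b₁ - 1) (by omega) (by simpa using hlen)
        (fun x hx => hapos x (by simp at hx ⊢; tauto))
        (fun x hx => hbpos x (by simp [hx]))
        (by
          intro i hi
          have := hchain (i + 1) (by simpa using Nat.succ_lt_succ hi)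
          simpa using this)
        (by simp only [List.getD_cons_zero]; omega)
      obtain ⟨⟨hne', hhd'⟩, hht', hfin', hlen'', hpk', hvl'⟩ := ih'
      set L' := dec (b₁ - 1) (a₂ :: as) bs with hL'
      set u := (a₁ - h).toNat with hu
      set d := (a₁ - b₁ + 1).toNat with hd
      have hu1 : 1 ≤ u := by omega
      have hd1 : 1 ≤ d := by omega
      have huz : (u : ℤ) = a₁ - h := by omega
      have hdz : (d : ℤ) = a₁ - b₁ + 1 := by omega
      set x := List.replicate u true ++ List.replicate d false with hx
      have hdec : dec h (a₁ :: a₂ :: as) (b₁ :: bs) = x ++ L' := rfl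
      have hxlen : x.length = u + d := by simp [hx]
      have hxne : x ≠ [] := by
        rw [← List.length_pos_iff, hxlen]; omega
      have hHx : heightAt x x.length = b₁ - 1 - h := by
        rw [hxlen, hx, heightAt_block_total]; omega
      have hxlast : x.getD (x.length - 1) false = false := by
        rw [hxlen, hx, getD_block]; simp; omega
      rw [hdec]
      refine ⟨⟨?_, ?_⟩, ?_, ?_, ?_, ?_, ?_⟩
      · intro hcontra
        exact hxne (List.append_eq_nil_iff.mp hcontra).1
      · rw [List.getD_append _ _ _ _ (by rw [hxlen]; omega), hx, getD_block]
        simp; omega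
      · -- heights bounded below
        intro i hi
        rw [List.length_append, hxlen] at hi
        rcases le_or_gt i (u + d) with h1 | h1
        · rw [heightAt_append_left _ _ (by rw [hxlen]; omega : i ≤ x.length)]
          have := heightAt_block_bound (u := u) (d := d) (i := i) h1
          rw [← hx] at this
          omega
        · obtain ⟨j, rfl⟩ : ∃ j, i = (u + d) + j := ⟨i - (u + d), by omega⟩
          have hj : j ≤ L'.length := by omega
          have h2 := heightAt_append x L' j
          rw [hxlen] at h2
          have hHx' : heightAt x (u + d) = b₁ - 1 - h := by rw [← hxlen]; exact hHx
          rw [h2, hHx']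
          have := hht' j hj
          omega
      · -- final height
        rw [List.length_append, heightAt_append, hHx, hfin']
        ring
      · -- length
        rw [List.length_append, hxlen]
        have hcast : ((u + d + L'.length : ℕ) : ℤ) = (u:ℤ) + (d:ℤ) + (L'.length:ℤ) := by
          push_cast; ring
        rw [hcast, huz, hdz, hlen'']
        simp only [List.sum_cons, List.length_cons]
        push_cast
        ring
      · -- peaks
        rw [peaks_append x L' hxne hne' hxlast hhd', hHx, hpk']
        conv_lhs => rw [hx]
        rw [peaks_block hu1 hd1, List.map_map, List.singleton_append]
        have hfun : ((fun z : ℤ => z + (b₁ - 1 - h)) ∘ fun z : ℤ => z - (b₁ - 1)) =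
            fun z : ℤ => z - h := by
          funext z; simp only [Function.comp]; ring
        rw [hfun, List.map_cons, huz]
        simp
      · -- valleys
        rw [valleys_append x L' hxne hne' hxlast hhd', hHx, hvl']
        conv_lhs => rw [hx]
        rw [valleys_block, List.map_map, List.nil_append, List.singleton_append]
        have hfun : ((fun z : ℤ => z + (b₁ - 1 - h)) ∘ fun z : ℤ => z - 1 - (b₁ - 1)) =
            fun z : ℤ => z - 1 - h := by
          funext z; simp only [Function.comp]; ring
        rw [hfun, List.map_cons]

lemma encQ : ∀ (N : ℕ) (l : List Bool) (v : ℤ), l.length ≤ N → 0 ≤ v → l ≠ [] →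
    l.getD 0 false = true →
    (∀ i ≤ l.length, -v ≤ heightAt l i) →
    heightAt l l.length = -v →
    dec v ((peakHeights l).map (· + v)) (((valleyHeights l).map (· + 1)).map (· + v)) = l ∧
    (((valleyHeights l).map (· + 1)).map (· + v)).length + 1 =
      ((peakHeights l).map (· + v)).length ∧
    (∀ x ∈ (peakHeights l).map (· + v), 0 < x) ∧
    (∀ x ∈ ((valleyHeights l).map (· + 1)).map (· + v), 0 < x) ∧
    (∀ i < (((valleyHeights l).map (· + 1)).map (· + v)).length,
      ((((valleyHeights l).map (· + 1)).map (· + v)).getD i 0) ≤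
        min (((peakHeights l).map (· + v)).getD i 0)
          (((peakHeights l).map (· + v)).getD (i + 1) 0)) ∧
    v + 1 ≤ ((peakHeights l).map (· + v)).getD 0 0 ∧
    2 * (((peakHeights l).map (· + v)).sum - (((valleyHeights l).map (· + 1)).map (· + v)).sum +
      ((((valleyHeights l).map (· + 1)).map (· + v)).length : ℤ)) = l.length + v := by
  intro N
  induction N with
  | zero =>
    intro l v hlen _ hne _ _ _
    exact absurd (List.length_eq_zero_iff.mp (Nat.le_zero.mp hlen)) hne
  | succ N ihN =>
    intro l v hlen h0 hne hhd hbd hfin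
    obtain ⟨c, ltail, hl⟩ := List.exists_cons_of_ne_nil hne
    have hc : c = true := by rw [hl] at hhd; simpa using hhd
    rw [hc] at hl
    -- first run of trues
    set t₁ := l.takeWhile (fun b => b) with ht₁def
    set l₂ := l.dropWhile (fun b => b) with hl₂def
    set u := t₁.length with hudef
    have ht₁ : t₁ = List.replicate u true := by
      rw [hudef]
      exact List.eq_replicate_of_mem (fun b hb => by simpa using List.mem_takeWhile_imp hb)
    have ht₁ne : t₁ ≠ [] := by
      rw [ht₁def, hl, List.takeWhile_cons_of_pos (by simp)]
      simp
    have hu1 : 1 ≤ u := by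
      rw [hudef]; exact List.length_pos_iff.mpr ht₁ne
    have hsplit1 : t₁ ++ l₂ = l := List.takeWhile_append_dropWhile
    -- l₂ nonempty
    have hl₂ne : l₂ ≠ [] := by
      intro hcon
      rw [hcon, List.append_nil] at hsplit1
      rw [← hsplit1, ht₁] at hfin
      rw [List.length_replicate, heightAt_replicate_true u le_rfl] at hfin
      omega
    obtain ⟨c₂, l₂t, hl₂⟩ := List.exists_cons_of_ne_nil hl₂ne
    have hc₂ : c₂ = false := by
      have h1 := List.head_dropWhile_not (fun b => b) hl₂ne
      have h2 : l₂.head hl₂ne = c₂ := by simp [hl₂]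
      rw [h2] at h1
      simpa using h1
    rw [hc₂] at hl₂
    -- run of falses in l₂
    set t₂ := l₂.takeWhile (fun b => !b) with ht₂def
    set rest := l₂.dropWhile (fun b => !b) with hrestdef
    set d := t₂.length with hddef
    have ht₂ : t₂ = List.replicate d false := by
      rw [hddef]
      refine List.eq_replicate_of_mem (fun b hb => ?_)
      have := List.mem_takeWhile_imp hb
      simpa using this
    have ht₂ne : t₂ ≠ [] := by
      rw [ht₂def, hl₂, List.takeWhile_cons_of_pos (by simp)]
      simp
    have hd1 : 1 ≤ d := by
      rw [hddef]; exact List.length_pos_iff.mpr ht₂ne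
    have hsplit2 : t₂ ++ rest = l₂ := List.takeWhile_append_dropWhile
    set x := List.replicate u true ++ List.replicate d false with hxdef
    have hlform : l = x ++ rest := by
      rw [hxdef, ← ht₁, ← ht₂, List.append_assoc, hsplit2, hsplit1]
    have hxlen : x.length = u + d := by simp [hxdef]
    have hxne : x ≠ [] := by rw [← List.length_pos_iff, hxlen]; omega
    have hllen : l.length = u + d + rest.length := by
      rw [hlform, List.length_append, hxlen]
    have hHx : heightAt x x.length = (u : ℤ) - d := by
      rw [hxlen, hxdef]; exact heightAt_block_total u d
    have hxlast : x.getD (x.length - 1) false = false := by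
      rw [hxlen, hxdef, getD_block]; simp; omega
    set m := (u : ℤ) - d with hmdef
    by_cases hrest : rest = []
    · -- base case: l is a single block
      rw [hrest, List.append_nil] at hlform
      have hfin2 : m = -v := by
        rw [← hHx, hxlen]
        rw [hlform, hxlen] at hfin
        exact hfin
      have hdz : (d : ℤ) = (u : ℤ) + v := by omega
      have hpk : peakHeights l = [(u : ℤ)] := by
        rw [hlform, hxdef]; exact peaks_block hu1 hd1
      have hvl : valleyHeights l = [] := by
        rw [hlform, hxdef]; exact valleys_block
      rw [hpk, hvl]
      simp only [List.map_nil, List.map_cons]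
      refine ⟨?_, by simp, ?_, by simp, by simp, ?_, ?_⟩
      · show List.replicate ((u : ℤ) + v - v).toNat true ++
            List.replicate ((u : ℤ) + v).toNat false = l
        have e1 : ((u : ℤ) + v - v).toNat = u := by omega
        have e2 : ((u : ℤ) + v).toNat = d := by omega
        rw [e1, e2, hlform, hxdef]
      · intro z hz
        simp at hz
        omega
      · simp only [List.getD_cons_zero]
        omega
      · simp only [List.sum_nil, List.sum_cons, List.length_nil]
        rw [hllen, hrest]
        push_cast
        simp
        omega
    · -- inductive case
      obtain ⟨rc, rt, hrc⟩ := List.exists_cons_of_ne_nil hrest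
      have hrhd : rest.getD 0 false = true := by
        have h1 := List.head_dropWhile_not (fun b => !b) hrest
        have h2 : rest.head hrest = rc := by simp [hrc]
        rw [h2] at h1
        rw [hrc]
        simpa using h1
      -- heights of rest
      have hhrel : ∀ i, heightAt l (u + d + i) = m + heightAt rest i := by
        intro i
        rw [hlform]
        have := heightAt_append x rest i
        rw [hxlen] at this
        rw [this, ← hxlen, hHx]
      have hm_ge : -v ≤ m := by
        have h1 := hbd (u + d) (by omega)
        have h2 := hhrel 0
        rw [heightAt_zero] at h2
        simp only [Nat.add_zero, add_zero] at h2
        omega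
      have hrest_bd : ∀ i ≤ rest.length, -(v + m) ≤ heightAt rest i := by
        intro i hi
        have := hbd (u + d + i) (by omega)
        rw [hhrel i] at this
        omega
      have hrest_fin : heightAt rest rest.length = -(v + m) := by
        have := hhrel rest.length
        rw [← hllen] at this
        rw [hfin] at this
        omega
      have ih := ihN rest (v + m) (by omega) (by omega) hrest hrhd hrest_bd hrest_fin
      obtain ⟨ih1, ih2, ih3, ih4, ih5, ih6, ih7⟩ := ih
      set P := peakHeights rest with hPdef
      set A' := P.map (· + (v + m)) with hA'def
      set B' := ((valleyHeights rest).map (· + 1)).map (· + (v + m)) with hB'def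
      -- compute peaks/valleys of l
      have hpx : peakHeights x = [(u : ℤ)] := by
        rw [hxdef]; exact peaks_block hu1 hd1
      have hvx : valleyHeights x = [] := by
        rw [hxdef]; exact valleys_block
      have hpk : peakHeights l = (u : ℤ) :: P.map (· + m) := by
        rw [hlform, peaks_append x rest hxne hrest hxlast hrhd, hHx, hpx,
          List.singleton_append, hPdef]
      have hvl : valleyHeights l = m :: (valleyHeights rest).map (· + m) := by
        rw [hlform, valleys_append x rest hxne hrest hxlast hrhd, hHx, hvx,
          List.nil_append, List.singleton_append]
      have hA : (peakHeights l).map (· + v) = ((u : ℤ) + v) :: A' := by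
        rw [hpk, List.map_cons, List.map_map, hA'def]
        congr 1
        apply List.map_congr_left
        intro z _
        simp only [Function.comp]
        ring
      have hB : ((valleyHeights l).map (· + 1)).map (· + v) = (m + 1 + v) :: B' := by
        rw [hvl, List.map_cons, List.map_cons, List.map_map, List.map_map, hB'def,
          List.map_map]
        congr 1
        apply List.map_congr_left
        intro z _
        simp only [Function.comp]
        ring
      -- A' is nonempty
      have hA'ne : A' ≠ [] := by
        intro hcon
        rw [hcon] at ih6
        simp at ih6
        omega
      obtain ⟨α, A'', hα⟩ := List.exists_cons_of_ne_nil hA'ne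
      rw [hA, hB]
      refine ⟨?_, ?_, ?_, ?_, ?_, ?_, ?_⟩
      · -- dec gives back l
        rw [hα]
        show List.replicate ((u : ℤ) + v - v).toNat true ++
            List.replicate ((u : ℤ) + v - (m + 1 + v) + 1).toNat false ++
              dec (m + 1 + v - 1) (α :: A'') B' = l
        have e1 : ((u : ℤ) + v - v).toNat = u := by omega
        have e2 : ((u : ℤ) + v - (m + 1 + v) + 1).toNat = d := by omega
        have e3 : m + 1 + v - 1 = v + m := by ring
        rw [e1, e2, e3, ← hα, ih1, hlform, hxdef]
      · rw [hα] at ih2 ⊢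
        simp at ih2 ⊢
        omega
      · intro z hz
        rw [List.mem_cons] at hz
        rcases hz with rfl | hz
        · omega
        · exact ih3 z (by rwa [hA'def] at hz)
      · intro z hz
        rw [List.mem_cons] at hz
        rcases hz with rfl | hz
        · omega
        · exact ih4 z (by rwa [hB'def] at hz)
      · intro i hi
        match i with
        | 0 =>
          simp only [List.getD_cons_zero, List.getD_cons_succ]
          have h6 := ih6
          rw [hα] at h6
          simp only [List.getD_cons_zero] at h6
          rw [hα]
          simp only [List.getD_cons_zero]
          omega
        | Nat.succ i' =>
          simp only [List.getD_cons_succ]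
          simp only [List.length_cons] at hi
          exact ih5 i' (by omega)
      · simp only [List.getD_cons_zero]
        omega
      · simp only [List.sum_cons, List.length_cons]
        push_cast
        rw [hllen]
        push_cast
        have : 2 * (A'.sum - B'.sum + (B'.length : ℤ)) = (rest.length : ℤ) + (v + m) := ih7
        omega

lemma head_true_of_nonneg {l : List Bool} (hne : l ≠ []) (h : 0 ≤ heightAt l 1) :
    l.getD 0 false = true := by
  obtain ⟨c, t, rfl⟩ := List.exists_cons_of_ne_nil hne
  cases c
  · exfalso
    simp [heightAt] at h
  · simp

lemma map_add_zero (L : List ℤ) : L.map (· + (0:ℤ)) = L := by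
  simp

/-- The peaks-and-valleys encoding is a bijection: the map sending a Dyck path of
length `2n` to its sequence of peak heights `(a_1, …, a_k)` and of (valley heights + 1)
`(b_1, …, b_{k-1})` is a bijection onto the set of pairs of sequences of positive
integers with `b_i ≤ min (a_i, a_{i+1})` and `∑ a_i - ∑ b_j + (k - 1) = n`. -/
theorem stmt16 (n : ℕ) (hn : 1 ≤ n) :
    Set.BijOn (fun l : List Bool => (peakHeights l, (valleyHeights l).map (· + 1)))
      {l : List Bool | IsDyckList l ∧ l.length = 2 * n}
      {p : List ℤ × List ℤ |
        p.1 ≠ [] ∧ p.2.length + 1 = p.1.length ∧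
        (∀ a ∈ p.1, 0 < a) ∧ (∀ b ∈ p.2, 0 < b) ∧
        (∀ i < p.2.length, p.2.getD i 0 ≤ min (p.1.getD i 0) (p.1.getD (i + 1) 0)) ∧
        p.1.sum - p.2.sum + p.2.length = n} := by
  have key : ∀ l ∈ {l : List Bool | IsDyckList l ∧ l.length = 2 * n},
      dec 0 (peakHeights l) ((valleyHeights l).map (· + 1)) = l ∧
      ((valleyHeights l).map (· + 1)).length + 1 = (peakHeights l).length ∧
      (∀ x ∈ peakHeights l, 0 < x) ∧
      (∀ x ∈ (valleyHeights l).map (· + 1), 0 < x) ∧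
      (∀ i < ((valleyHeights l).map (· + 1)).length,
        ((valleyHeights l).map (· + 1)).getD i 0 ≤
          min ((peakHeights l).getD i 0) ((peakHeights l).getD (i + 1) 0)) ∧
      (0:ℤ) + 1 ≤ (peakHeights l).getD 0 0 ∧
      2 * ((peakHeights l).sum - ((valleyHeights l).map (· + 1)).sum +
        (((valleyHeights l).map (· + 1)).length : ℤ)) = l.length + 0 := by
    intro l hl
    obtain ⟨⟨hdy, hfin⟩, hlen⟩ := hl
    have hne : l ≠ [] := by
      rw [← List.length_pos_iff, hlen]; omega
    have hhd : l.getD 0 false = true :=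
      head_true_of_nonneg hne (hdy 1 (by rw [hlen]; omega))
    have hbd : ∀ i ≤ l.length, -(0:ℤ) ≤ heightAt l i := by
      intro i hi; simpa using hdy i hi
    have hfin0 : heightAt l l.length = -(0:ℤ) := by simpa using hfin
    have E := encQ l.length l 0 le_rfl le_rfl hne hhd hbd hfin0
    rw [map_add_zero, map_add_zero] at E
    exact E
  have keyD : ∀ p ∈ {p : List ℤ × List ℤ |
        p.1 ≠ [] ∧ p.2.length + 1 = p.1.length ∧
        (∀ a ∈ p.1, 0 < a) ∧ (∀ b ∈ p.2, 0 < b) ∧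
        (∀ i < p.2.length, p.2.getD i 0 ≤ min (p.1.getD i 0) (p.1.getD (i + 1) 0)) ∧
        p.1.sum - p.2.sum + p.2.length = n},
      (dec 0 p.1 p.2 ≠ [] ∧ (dec 0 p.1 p.2).getD 0 false = true) ∧
      (∀ i ≤ (dec 0 p.1 p.2).length, -(0:ℤ) ≤ heightAt (dec 0 p.1 p.2) i) ∧
      heightAt (dec 0 p.1 p.2) (dec 0 p.1 p.2).length = -(0:ℤ) ∧
      ((dec 0 p.1 p.2).length : ℤ) = 2 * (p.1.sum - p.2.sum + p.2.length) - 0 ∧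
      peakHeights (dec 0 p.1 p.2) = p.1.map (· - 0) ∧
      valleyHeights (dec 0 p.1 p.2) = p.2.map (· - 1 - 0) := by
    intro p hp
    obtain ⟨hp1, hp2, hp3, hp4, hp5, hp6⟩ := hp
    have hhead : (0:ℤ) + 1 ≤ p.1.getD 0 0 := by
      obtain ⟨a, t, ha⟩ := List.exists_cons_of_ne_nil hp1
      rw [ha, List.getD_cons_zero]
      have := hp3 a (by rw [ha]; simp)
      omega
    exact decP p.2 p.1 0 le_rfl hp2 hp3 hp4 hp5 hhead
  apply Set.InvOn.bijOn (f' := fun p : List ℤ × List ℤ => dec 0 p.1 p.2)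
  · constructor
    · intro l hl
      exact (key l hl).1
    · intro p hp
      obtain ⟨_, _, _, _, hpk, hvl⟩ := keyD p hp
      have e1 : p.1.map (· - (0:ℤ)) = p.1 := by simp
      have e2 : (p.2.map (· - 1 - (0:ℤ))).map (· + 1) = p.2 := by
        rw [List.map_map]
        have : ((fun z : ℤ => z + 1) ∘ fun z : ℤ => z - 1 - 0) = fun z : ℤ => z := by
          funext z; simp
        rw [this, List.map_id']
      show (peakHeights (dec 0 p.1 p.2), (valleyHeights (dec 0 p.1 p.2)).map (· + 1)) = p
      rw [hpk, hvl, e1, e2]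
  · intro l hl
    obtain ⟨_, E2, E3, E4, E5, E6, E7⟩ := key l hl
    simp only [Set.mem_setOf_eq]
    refine ⟨?_, E2, E3, E4, E5, ?_⟩
    · intro hcon
      rw [hcon] at E6
      simp at E6
    · have hlen : l.length = 2 * n := hl.2
      rw [hlen] at E7
      push_cast at E7 ⊢
      omega
  · intro p hp
    obtain ⟨⟨hne, _⟩, hbd, hfin, hlen, _, _⟩ := keyD p hp
    refine ⟨⟨fun i hi => by simpa using hbd i hi, by simpa using hfin⟩, ?_⟩
    have hp6 := hp.2.2.2.2.2
    rw [hp6] at hlen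
    show (dec 0 p.1 p.2).length = 2 * n
    omega
end
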